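/- Let A ∈ ℝ^{m×n}, let k ≥ 1, and let P ∈ ℝ^{m×(k+1)} and Q ∈ ℝ^{n×(k+1)} have orthonormal columns and satisfy PᵀA = (PᵀAQ)Qᵀ. Set B̄ := PᵀAQ ∈ ℝ^{(k+1)×(k+1)}. If C̄ ∈ ℝ^{(k+1)×(k+1)} is a best rank-k approximation of B̄ in spectral norm (i.e., rank C̄ ≤ k and ‖B̄ − C̄‖ ≤ ‖B̄ − D‖ for every D ∈ ℝ^{(k+1)×(k+1)} with rank D ≤ k), then ‖A − P C̄ Qᵀ‖ ≤ σ_{k+1}(B̄) + ‖(I_m − PPᵀ)A‖, where σ_{k+1}(B̄) is the smallest singular value of B̄. -/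
import Mathlib

open Matrix

/-- Spectral norm (largest singular value) of a real matrix. -/
noncomputable def specNorm {a b : ℕ} (M : Matrix (Fin a) (Fin b) ℝ) : ℝ :=
  ‖LinearMap.toContinuousLinearMap (Matrix.toEuclideanLin M)‖

/-- The `j`-th largest singular value of a real matrix (`j ≥ 1`), characterized via the
Eckart–Young theorem as the minimal spectral-norm distance to matrices of rank `< j`;
it is `0` when `j` exceeds the smaller dimension. -/
noncomputable def singVal {a b : ℕ} (M : Matrix (Fin a) (Fin b) ℝ) (j : ℕ) : ℝ :=
  sInf {r : ℝ | ∃ D : Matrix (Fin a) (Fin b) ℝ, D.rank < j ∧ r = specNorm (M - D)}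

/-- The matrix of the first `k` columns of `M`. -/
def colSub {a b : ℕ} (M : Matrix (Fin a) (Fin b) ℝ) (k : ℕ) (hk : k ≤ b) :
    Matrix (Fin a) (Fin k) ℝ :=
  M.submatrix id fun j => ⟨j.1, lt_of_lt_of_le j.2 hk⟩

/-- The leading `r × c` submatrix of `M`. -/
def subUL {a b : ℕ} (M : Matrix (Fin a) (Fin b) ℝ) (r c : ℕ) (hr : r ≤ a) (hc : c ≤ b) :
    Matrix (Fin r) (Fin c) ℝ :=
  M.submatrix (fun i => ⟨i.1, lt_of_lt_of_le i.2 hr⟩) (fun j => ⟨j.1, lt_of_lt_of_le j.2 hc⟩)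

open scoped Matrix.Norms.L2Operator

lemma specNorm_eq_norm {a b : ℕ} (M : Matrix (Fin a) (Fin b) ℝ) : specNorm M = ‖M‖ := rfl

lemma norm_le_one_of_iso {a b : ℕ} (P : Matrix (Fin a) (Fin (b+1)) ℝ)
    (hP : Pᵀ * P = 1) : ‖P‖ ≤ 1 := by
  have h1 : ‖(1 : Matrix (Fin (b+1)) (Fin (b+1)) ℝ)‖ = 1 := by
    rw [Matrix.cstar_norm_def, _root_.map_one]
    exact ContinuousLinearMap.norm_id
  have h2 : ‖P‖ * ‖P‖ = 1 := by
    have := Matrix.l2_opNorm_conjTranspose_mul_self P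
    rwa [Matrix.conjTranspose_eq_transpose_of_trivial, hP, h1, eq_comm] at this
  nlinarith [norm_nonneg P]

lemma norm_sandwich_le {a b c : ℕ} (P : Matrix (Fin a) (Fin (c+1)) ℝ) (hP : Pᵀ * P = 1)
    (Q : Matrix (Fin b) (Fin (c+1)) ℝ) (hQ : Qᵀ * Q = 1)
    (M : Matrix (Fin (c+1)) (Fin (c+1)) ℝ) : ‖P * M * Qᵀ‖ ≤ ‖M‖ := by
  have hQt : ‖Qᵀ‖ ≤ 1 := by
    rw [show Qᵀ = Qᴴ from (Matrix.conjTranspose_eq_transpose_of_trivial Q).symm,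
      Matrix.l2_opNorm_conjTranspose]
    exact norm_le_one_of_iso Q hQ
  calc ‖P * M * Qᵀ‖ ≤ ‖P * M‖ * ‖Qᵀ‖ := Matrix.l2_opNorm_mul _ _
    _ ≤ (‖P‖ * ‖M‖) * ‖Qᵀ‖ := by
        exact mul_le_mul_of_nonneg_right (Matrix.l2_opNorm_mul _ _) (norm_nonneg _)
    _ ≤ (1 * ‖M‖) * 1 := by
        exact mul_le_mul (mul_le_mul_of_nonneg_right (norm_le_one_of_iso P hP) (norm_nonneg _))
          hQt (norm_nonneg _) (by positivity)
    _ = ‖M‖ := by ring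

/-- if `P, Q` have orthonormal columns, `PᵀA = (PᵀAQ)Qᵀ`, and `C̄` is a best
rank-`k` spectral-norm approximation of `B̄ = PᵀAQ`, then
`‖A - P C̄ Qᵀ‖ ≤ σ_{k+1}(B̄) + ‖(I - PPᵀ)A‖`. -/
theorem truncated_projected_approx_error_le_sigma_Bbar
    (m n k : ℕ) (hk : 1 ≤ k)
    (A : Matrix (Fin m) (Fin n) ℝ)
    (P : Matrix (Fin m) (Fin (k + 1)) ℝ) (hP : Pᵀ * P = 1)
    (Q : Matrix (Fin n) (Fin (k + 1)) ℝ) (hQ : Qᵀ * Q = 1)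
    (hPA : Pᵀ * A = (Pᵀ * A * Q) * Qᵀ)
    (C : Matrix (Fin (k + 1)) (Fin (k + 1)) ℝ) (hCrank : C.rank ≤ k)
    (hCbest : ∀ D : Matrix (Fin (k + 1)) (Fin (k + 1)) ℝ, D.rank ≤ k →
      specNorm (Pᵀ * A * Q - C) ≤ specNorm (Pᵀ * A * Q - D)) :
    specNorm (A - P * C * Qᵀ) ≤
      singVal (Pᵀ * A * Q) (k + 1) + specNorm ((1 - P * Pᵀ) * A) := by
  have key : A - P * C * Qᵀ = P * (Pᵀ * A * Q - C) * Qᵀ + (1 - P * Pᵀ) * A := by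
    have h1 : P * (Pᵀ * A * Q) * Qᵀ = P * Pᵀ * A := by
      rw [Matrix.mul_assoc P (Pᵀ * A * Q) Qᵀ, ← hPA, Matrix.mul_assoc]
    rw [Matrix.mul_sub, Matrix.sub_mul, h1, Matrix.sub_mul, Matrix.one_mul]
    abel
  have hmid : specNorm (P * (Pᵀ * A * Q - C) * Qᵀ) ≤ specNorm (Pᵀ * A * Q - C) := by
    rw [specNorm_eq_norm, specNorm_eq_norm]
    exact norm_sandwich_le P hP Q hQ _
  have hsing : specNorm (Pᵀ * A * Q - C) ≤ singVal (Pᵀ * A * Q) (k + 1) := by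
    apply le_csInf
    · exact ⟨specNorm (Pᵀ * A * Q - C), C, Nat.lt_succ_of_le hCrank, rfl⟩
    · rintro r ⟨D, hD, rfl⟩
      exact hCbest D (Nat.lt_succ_iff.mp hD)
  calc specNorm (A - P * C * Qᵀ)
      = ‖P * (Pᵀ * A * Q - C) * Qᵀ + (1 - P * Pᵀ) * A‖ := by rw [key, specNorm_eq_norm]
    _ ≤ ‖P * (Pᵀ * A * Q - C) * Qᵀ‖ + ‖(1 - P * Pᵀ) * A‖ := norm_add_le _ _
    _ ≤ singVal (Pᵀ * A * Q) (k + 1) + specNorm ((1 - P * Pᵀ) * A) := by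
        rw [← specNorm_eq_norm, ← specNorm_eq_norm]
        exact add_le_add (le_trans hmid hsing) le_rfl
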